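/- A point p of the product of simplices is a fixed point of the Nash map T if and only if p is a Nash equilibrium: pv_i(p) ≥ pv_i(p with p_i replaced by δ_{f_i}) for every player i and every pure strategy f_i. -/
import Mathlib


namespace QuantumNash


variable {n : ℕ} {S : Fin n → Type*}

/-- Multilinear (mixed-strategy) extension of the pure payoff `u i`. -/
def pv [∀ i, Fintype (S i)] (u : Fin n → (∀ i, S i) → ℝ)
    (i : Fin n) (p : ∀ j, S j → ℝ) : ℝ :=
  ∑ t : ∀ j, S j, (∏ j, p j (t j)) * u i t

/-- The vertex (pure strategy) `δ_{f}` of the simplex `Δ(S i)`. -/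
def pureStrat [∀ i, DecidableEq (S i)] (i : Fin n) (f : S i) : S i → ℝ :=
  fun g => if g = f then 1 else 0

/-- Nash's gain functions `φ_{i f_i}(p) = max(0, pv_i(p←δ_{f_i}) − pv_i(p))`. -/
noncomputable def gain [∀ i, Fintype (S i)] [∀ i, DecidableEq (S i)] (u : Fin n → (∀ i, S i) → ℝ)
    (i : Fin n) (f : S i) (p : ∀ j, S j → ℝ) : ℝ :=
  max 0 (pv u i (Function.update p i (pureStrat i f)) - pv u i p)

/-- The Nash map `T`. -/
noncomputable def nashMap [∀ i, Fintype (S i)] [∀ i, DecidableEq (S i)] (u : Fin n → (∀ i, S i) → ℝ)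
    (p : ∀ j, S j → ℝ) : ∀ j, S j → ℝ :=
  fun i f => (p i f + gain u i f p) / (1 + ∑ g, gain u i g p)

/-- The product of simplices `Δ(S_1) × ... × Δ(S_n)`. -/
def simplexProd [∀ i, Fintype (S i)] : Set (∀ i, S i → ℝ) :=
  {p | ∀ i, p i ∈ stdSimplex ℝ (S i)}

lemma sum_pv [∀ i, Fintype (S i)] [∀ i, DecidableEq (S i)]
    (u : Fin n → (∀ i, S i) → ℝ) (i : Fin n) (p : ∀ j, S j → ℝ) :
    ∑ f, p i f * pv u i (Function.update p i (pureStrat i f)) = pv u i p := by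
  unfold pv
  simp_rw [Finset.mul_sum]
  rw [Finset.sum_comm]
  refine Finset.sum_congr rfl fun t _ => ?_
  have hprod : ∀ f : S i, (∏ j, Function.update p i (pureStrat i f) j (t j)) =
      pureStrat i f (t i) * ∏ j ∈ Finset.univ.erase i, p j (t j) := by
    intro f
    rw [← Finset.mul_prod_erase Finset.univ _ (Finset.mem_univ i)]
    congr 1
    · simp
    · exact Finset.prod_congr rfl fun j hj => by
        rw [Function.update_of_ne (Finset.ne_of_mem_erase hj)]
  simp_rw [hprod]
  rw [← Finset.mul_prod_erase Finset.univ (fun j => p j (t j)) (Finset.mem_univ i)]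
  simp [pureStrat, mul_assoc, mul_ite, ite_mul, Finset.sum_ite_eq]

/-- a point of the product of simplices is a fixed point of the Nash map
if and only if it is a Nash equilibrium (no profitable pure-strategy deviation). -/
theorem nashMap_fixedPoint_iff_equilibrium
    [∀ i, Fintype (S i)] [∀ i, DecidableEq (S i)] [∀ i, Nonempty (S i)]
    (u : Fin n → (∀ i, S i) → ℝ) (p : ∀ i, S i → ℝ) (hp : p ∈ simplexProd (S := S)) :
    nashMap u p = p ↔
      ∀ (i : Fin n) (f : S i),
        pv u i (Function.update p i (pureStrat i f)) ≤ pv u i p := by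
  constructor
  · intro hfix i f
    have hGnn : 0 ≤ ∑ g, gain u i g p :=
      Finset.sum_nonneg fun g _ => le_max_left _ _
    have hpos : (0:ℝ) < 1 + ∑ g, gain u i g p := by linarith
    have hfix' : ∀ g : S i, gain u i g p = p i g * ∑ g', gain u i g' p := by
      intro g
      have h := congrFun (congrFun hfix i) g
      unfold nashMap at h
      field_simp at h
      linarith [h]
    have hG0 : ∑ g, gain u i g p = 0 := by
      by_contra hne
      have hGpos : 0 < ∑ g, gain u i g p := lt_of_le_of_ne hGnn (Ne.symm hne)
      have key : ∑ g, p i g * (pv u i (Function.update p i (pureStrat i g)) - pv u i p) = 0 := by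
        simp only [mul_sub]
        rw [Finset.sum_sub_distrib, sum_pv, ← Finset.sum_mul, (hp i).2, one_mul, sub_self]
      obtain ⟨g, hg1, hg2⟩ : ∃ g, 0 < p i g ∧
          pv u i (Function.update p i (pureStrat i g)) - pv u i p ≤ 0 := by
        by_contra h
        push_neg at h
        obtain ⟨g0, hg0⟩ : ∃ g0, 0 < p i g0 := by
          by_contra h0
          push_neg at h0
          have : ∑ g, p i g = 0 :=
            Finset.sum_eq_zero fun g _ => le_antisymm (h0 g) ((hp i).1 g)
          rw [(hp i).2] at this; norm_num at this
        have : 0 < ∑ g, p i g * (pv u i (Function.update p i (pureStrat i g)) - pv u i p) := by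
          refine Finset.sum_pos' (fun g _ => ?_) ⟨g0, Finset.mem_univ g0, ?_⟩
          · rcases lt_or_eq_of_le ((hp i).1 g) with hlt | heq
            · exact le_of_lt (mul_pos hlt (h g hlt))
            · simp [← heq]
          · exact mul_pos hg0 (h g0 hg0)
        linarith
      have hzero : gain u i g p = 0 := max_eq_left hg2
      have : 0 < gain u i g p := hfix' g ▸ mul_pos hg1 hGpos
      linarith
    have hall : gain u i f p = 0 := by
      have := (Finset.sum_eq_zero_iff_of_nonneg
        (fun g _ => le_max_left 0 _)).mp hG0 f (Finset.mem_univ f)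
      exact this
    have := max_eq_left_iff.mp hall
    linarith
  · intro hne
    funext i f
    have hg : ∀ g, gain u i g p = 0 := fun g => max_eq_left (by linarith [hne i g])
    simp [nashMap, hg]

end QuantumNash
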